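/- There exist an absolute constant C and P₀ such that for every prime p ≥ P₀, every divisor t of p − 1 with t ≤ p^{3/4}, and every b ∈ ℤ/pℤ with b ≠ 1, the number of pairs (w, ρ) ∈ (ℤ/pℤ)ˣ × (ℤ/pℤ)ˣ satisfying w + w⁻¹ = ρ + b·ρ⁻¹ and w^t = ρ^t = 1 is at most C·t^{3/4}. -/

import Mathlib

open Polynomial Finset

lemma coeff_linear_pow {F : Type*} [CommRing F] (u v : F) (n k : ℕ) :
    ((C u * X + C v) ^ n).coeff k = (n.choose k : F) * u ^ k * v ^ (n - k) := by
  have hterm : ∀ m : ℕ, (C u * X) ^ m * C v ^ (n - m) * ((n.choose m : ℕ) : F[X])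
      = C (u ^ m * v ^ (n - m) * (n.choose m : F)) * X ^ m := by
    intro m
    rw [mul_pow, ← C_pow, ← C_pow, ← C_eq_natCast, map_mul, map_mul]
    ring
  rw [add_pow, finset_sum_coeff]
  have : ∀ m ∈ Finset.range (n + 1),
      ((C u * X) ^ m * C v ^ (n - m) * ((n.choose m : ℕ) : F[X])).coeff k
      = (C (u ^ m * v ^ (n - m) * (n.choose m : F)) * X ^ m).coeff k := by
    intro m _; rw [hterm]
  rw [Finset.sum_congr rfl this, Finset.sum_eq_single k]
  · rw [coeff_C_mul, coeff_X_pow, if_pos rfl]; ring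
  · intro m _ hmk
    rw [coeff_C_mul, coeff_X_pow, if_neg (fun h => hmk h.symm), mul_zero]
  · intro hk
    have : n.choose k = 0 := Nat.choose_eq_zero_of_lt (by simpa using hk)
    rw [coeff_C_mul, this]; simp

lemma sparse_rootMultiplicity {p : ℕ} [hp : Fact p.Prime] :
    ∀ (N : ℕ) (f : Polynomial (ZMod p)), f.natDegree ≤ N → f ≠ 0 → f.natDegree < p →
    ∀ x : ZMod p, x ≠ 0 → f.rootMultiplicity x + 1 ≤ f.support.card := by
  intro N
  induction N with
  | zero =>
    intro f hN hf hdeg x hx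
    have : ¬ f.IsRoot x := by
      have hc : f = C (f.coeff 0) := (Polynomial.eq_C_of_natDegree_eq_zero (Nat.le_zero.mp hN))
      intro hroot
      rw [hc] at hroot hf
      simp [IsRoot] at hroot
      exact hf (by rw [hroot, map_zero])
    rw [rootMultiplicity_eq_zero this]
    simpa [Finset.card_pos, Polynomial.nonempty_support_iff] using hf
  | succ N ih =>
    intro f hN hf hdeg x hx
    rcases Nat.eq_zero_or_pos (f.rootMultiplicity x) with h0 | hpos
    · rw [h0]
      simpa [Finset.card_pos, Polynomial.nonempty_support_iff] using hf
    have hroot : f.IsRoot x := (rootMultiplicity_pos hf).mp hpos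
    by_cases hc0 : f.coeff 0 = 0
    · -- f = X * g
      obtain ⟨g, hg⟩ := Polynomial.X_dvd_iff.mpr hc0
      have hgne : g ≠ 0 := by rintro rfl; simp at hg; exact hf hg
      have hdegf : f.natDegree = g.natDegree + 1 := by rw [hg]; exact natDegree_X_mul hgne
      have hmult : f.rootMultiplicity x = g.rootMultiplicity x := by
        rw [hg, rootMultiplicity_mul (by rw [← hg]; exact hf)]
        rw [rootMultiplicity_eq_zero (by simpa [IsRoot] using hx)]
        simp
      have hsupp : f.support.card = g.support.card := by
        have : f.support = g.support.image (· + 1) := by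
          ext m
          simp only [Polynomial.mem_support_iff, Finset.mem_image]
          constructor
          · intro hm
            cases m with
            | zero => exact absurd (by rw [hg] at hc0 ⊢; exact hc0) hm
            | succ m' => exact ⟨m', by rw [hg, coeff_X_mul] at hm; exact hm, rfl⟩
          · rintro ⟨m', hm', rfl⟩
            rw [hg, coeff_X_mul]; exact hm'
        rw [this, Finset.card_image_of_injective _ (fun a b h => by omega)]
      rw [hmult, hsupp]
      exact ih g (by omega) hgne (by omega) x hx
    · -- derivative step
      set r := f.rootMultiplicity x with hr
      have hndeg : f.natDegree ≠ 0 := by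
        intro h
        have hC := Polynomial.eq_C_of_natDegree_eq_zero h
        rw [hC] at hroot hf
        simp [IsRoot] at hroot
        exact hf (by rw [hroot, map_zero])
      have hn1 : 1 ≤ f.natDegree := Nat.one_le_iff_ne_zero.mpr hndeg
      have hcastn : ((f.natDegree : ℕ) : ZMod p) ≠ 0 := by
        intro h
        rw [ZMod.natCast_eq_zero_iff] at h
        have := Nat.le_of_dvd (by omega) h
        omega
      have hfd : derivative f ≠ 0 := by
        intro hzero
        have hlead : f.coeff f.natDegree ≠ 0 := Polynomial.leadingCoeff_ne_zero.mpr hf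
        have hco : (derivative f).coeff (f.natDegree - 1)
            = f.coeff f.natDegree * (f.natDegree : ZMod p) := by
          rw [coeff_derivative]
          have h1 : f.natDegree - 1 + 1 = f.natDegree := by omega
          have h2 : ((f.natDegree - 1 : ℕ) : ZMod p) + 1 = (f.natDegree : ZMod p) := by
            rw [Nat.cast_sub hn1]; ring
          rw [h1, h2]
        rw [hzero, coeff_zero] at hco
        rcases mul_eq_zero.mp hco.symm with h | h
        · exact hlead h
        · exact hcastn h
      -- multiplicity drops by at most one under derivative
      have hdvd : (X - C x) ^ r ∣ f := (le_rootMultiplicity_iff hf).mp (le_refl r)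
      obtain ⟨h, hh⟩ := hdvd
      have hdvd' : (X - C x) ^ (r - 1) ∣ derivative f := by
        have hpow : (X - C x) ^ r = (X - C x) ^ (r - 1) * (X - C x) := by
          rw [← pow_succ]; congr 1; omega
        refine ⟨C (r : ZMod p) * derivative (X - C x) * h + (X - C x) * derivative h, ?_⟩
        rw [hh, derivative_mul, derivative_pow, hpow]
        ring
      have hmd : r - 1 ≤ (derivative f).rootMultiplicity x :=
        (le_rootMultiplicity_iff hfd).mpr hdvd'
      -- support card decreases
      have hs0 : (0 : ℕ) ∈ f.support := Polynomial.mem_support_iff.mpr hc0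
      have hsub : (derivative f).support ⊆ (f.support.erase 0).image (· - 1) := by
        intro m hm
        rw [Polynomial.mem_support_iff, coeff_derivative] at hm
        have hm' : f.coeff (m + 1) ≠ 0 := by
          intro h; rw [h, zero_mul] at hm; exact hm rfl
        refine Finset.mem_image.mpr ⟨m + 1, ?_, by omega⟩
        exact Finset.mem_erase.mpr ⟨by omega, Polynomial.mem_support_iff.mpr hm'⟩
      have hcard : (derivative f).support.card + 1 ≤ f.support.card := by
        have h1 := Finset.card_le_card hsub
        have h2 := Finset.card_image_le (s := f.support.erase 0) (f := (· - 1))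
        have h3 := Finset.card_erase_of_mem hs0
        have h4 : 1 ≤ f.support.card := Finset.card_pos.mpr ⟨0, hs0⟩
        omega
      have hdd := Polynomial.natDegree_derivative_lt hndeg
      have := ih (derivative f) (by omega) hfd (by omega) x hx
      omega

noncomputable def mkMon {F : Type*} [Field F] (t q : ℕ) (b : F)
    (v : Fin (2*q+13) × Fin (q^3) × Fin q) : F[X] :=
  X ^ (v.2.1.1 + t * v.2.2.1) * (C b * X - 1) ^ (t * v.1.1) * (X - 1) ^ (t * (2*q+12 - v.1.1))

noncomputable def mkPsi {F : Type*} [Field F] (t q : ℕ) (b : F)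
    (l : Fin (2*q+13) × Fin (q^3) × Fin q → F) : F[X] :=
  ∑ v, C (l v) * mkMon t q b v

noncomputable def mkRv {F : Type*} [Field F] (t q : ℕ) (b : F)
    (v : Fin (2*q+13) × Fin (q^3) × Fin q) (k : ℕ) : F[X] :=
  ∑ x ∈ antidiagonal k, ∑ y ∈ antidiagonal x.1,
    C ((((v.2.1.1 + t * v.2.2.1).choose y.1 * (t * v.1.1).choose y.2 *
        (t * (2*q+12 - v.1.1)).choose x.2 : ℕ) : F) * b ^ y.2) *
      (X ^ (v.2.1.1 + k - y.1) * (C b * X - 1) ^ (k - y.2) * (X - 1) ^ (k - x.2))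

noncomputable def mkRk {F : Type*} [Field F] (t q : ℕ) (b : F)
    (l : Fin (2*q+13) × Fin (q^3) × Fin q → F) (k : ℕ) : F[X] :=
  ∑ v, C (l v) * mkRv t q b v k


lemma key_term_identity {F : Type*} [Field F] (t a i j m k : ℕ) (b x₀ s : F)
    (hxt : x₀ ^ t = 1) (hs1 : (x₀ - 1) ^ t = s) (hs2 : (b * x₀ - 1) ^ t = s) :
    (x₀ * (b * x₀ - 1) * (x₀ - 1)) ^ k *
      ((X + C x₀) ^ (a + t * i) * (C b * X + C (b * x₀ - 1)) ^ (t * j) *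
        (X + C (x₀ - 1)) ^ (t * m)).coeff k
    = s ^ (j + m) * Polynomial.eval x₀ (∑ x ∈ antidiagonal k, ∑ y ∈ antidiagonal x.1,
        C ((((a + t * i).choose y.1 * (t * j).choose y.2 * (t * m).choose x.2 : ℕ) : F) * b ^ y.2) *
          (X ^ (a + k - y.1) * (C b * X - 1) ^ (k - y.2) * (X - 1) ^ (k - x.2))) := by
  rw [coeff_mul, Finset.mul_sum, eval_finset_sum, Finset.mul_sum]
  apply Finset.sum_congr rfl
  intro x hx
  rw [coeff_mul, Finset.sum_mul, Finset.mul_sum, eval_finset_sum, Finset.mul_sum]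
  apply Finset.sum_congr rfl
  intro y hy
  have hxm : x.1 + x.2 = k := Finset.HasAntidiagonal.mem_antidiagonal.mp hx
  have hym : y.1 + y.2 = x.1 := Finset.HasAntidiagonal.mem_antidiagonal.mp hy
  -- rewrite the three coefficients
  have hc1 : ((X + C x₀) ^ (a + t * i)).coeff y.1
      = ((a + t * i).choose y.1 : F) * x₀ ^ (a + t * i - y.1) := by
    rw [show (X + C x₀ : F[X]) = C 1 * X + C x₀ by rw [C_1, one_mul], coeff_linear_pow]
    simp
  have hc2 : ((C b * X + C (b * x₀ - 1)) ^ (t * j)).coeff y.2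
      = ((t * j).choose y.2 : F) * b ^ y.2 * (b * x₀ - 1) ^ (t * j - y.2) := by
    rw [coeff_linear_pow]
  have hc3 : ((X + C (x₀ - 1)) ^ (t * m)).coeff x.2
      = ((t * m).choose x.2 : F) * (x₀ - 1) ^ (t * m - x.2) := by
    rw [show (X + C (x₀ - 1) : F[X]) = C 1 * X + C (x₀ - 1) by rw [C_1, one_mul],
      coeff_linear_pow]
    simp
  rw [hc1, hc2, hc3]
  simp only [eval_mul, eval_pow, eval_C, eval_X, eval_sub, eval_one, eval_add]
  -- case analysis on whether choose factors vanish
  rcases le_or_gt y.1 (a + t * i) with h1 | h1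
  rotate_left
  · rw [Nat.choose_eq_zero_of_lt h1]; push_cast; ring
  rcases le_or_gt y.2 (t * j) with h2 | h2
  rotate_left
  · rw [Nat.choose_eq_zero_of_lt h2]; push_cast; ring
  rcases le_or_gt x.2 (t * m) with h3 | h3
  rotate_left
  · rw [Nat.choose_eq_zero_of_lt h3]; push_cast; ring
  have e1 : x₀ ^ k * x₀ ^ (a + t * i - y.1) = x₀ ^ (a + k - y.1) := by
    rw [← pow_add, show k + (a + t * i - y.1) = t * i + (a + k - y.1) by omega, pow_add,
      pow_mul, hxt, one_pow, one_mul]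
  have e2 : (b * x₀ - 1) ^ k * (b * x₀ - 1) ^ (t * j - y.2)
      = s ^ j * (b * x₀ - 1) ^ (k - y.2) := by
    rw [← pow_add, show k + (t * j - y.2) = t * j + (k - y.2) by omega, pow_add,
      pow_mul, hs2]
  have e3 : (x₀ - 1) ^ k * (x₀ - 1) ^ (t * m - x.2) = s ^ m * (x₀ - 1) ^ (k - x.2) := by
    rw [← pow_add, show k + (t * m - x.2) = t * m + (k - x.2) by omega, pow_add,
      pow_mul, hs1]
  calc (x₀ * (b * x₀ - 1) * (x₀ - 1)) ^ k *
        ((((a + t * i).choose y.1 : F) * x₀ ^ (a + t * i - y.1)) *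
         (((t * j).choose y.2 : F) * b ^ y.2 * (b * x₀ - 1) ^ (t * j - y.2)) *
         (((t * m).choose x.2 : F) * (x₀ - 1) ^ (t * m - x.2)))
      = (((a + t * i).choose y.1 : F) * ((t * j).choose y.2 : F) * ((t * m).choose x.2 : F)
          * b ^ y.2) *
        ((x₀ ^ k * x₀ ^ (a + t * i - y.1)) *
         ((b * x₀ - 1) ^ k * (b * x₀ - 1) ^ (t * j - y.2)) *
         ((x₀ - 1) ^ k * (x₀ - 1) ^ (t * m - x.2))) := by
        rw [mul_pow, mul_pow]; ring
    _ = (((a + t * i).choose y.1 : F) * ((t * j).choose y.2 : F) * ((t * m).choose x.2 : F)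
          * b ^ y.2) *
        (x₀ ^ (a + k - y.1) * (s ^ j * (b * x₀ - 1) ^ (k - y.2)) *
          (s ^ m * (x₀ - 1) ^ (k - x.2))) := by rw [e1, e2, e3]
    _ = s ^ (j + m) * ((((a + t * i).choose y.1 * (t * j).choose y.2 * (t * m).choose x.2 : ℕ) : F)
          * b ^ y.2 * (x₀ ^ (a + k - y.1) * (b * x₀ - 1) ^ (k - y.2) * (x₀ - 1) ^ (k - x.2))) := by
        rw [pow_add]; push_cast; ring


section Mk
variable {F : Type*} [Field F]

lemma mkRk_sub (t q : ℕ) (b : F) (l l' : Fin (2*q+13) × Fin (q^3) × Fin q → F) (k : ℕ) :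
    mkRk t q b (l - l') k = mkRk t q b l k - mkRk t q b l' k := by
  unfold mkRk
  rw [← Finset.sum_sub_distrib]
  apply Finset.sum_congr rfl
  intro v _
  rw [Pi.sub_apply, map_sub, sub_mul]

lemma natDegree_CXsub1_pow_le (b : F) (n : ℕ) : ((C b * X - 1 : F[X]) ^ n).natDegree ≤ n := by
  apply le_trans natDegree_pow_le
  have h : (C b * X - 1 : F[X]).natDegree ≤ 1 := by
    apply le_trans (natDegree_sub_le _ _)
    simp only [natDegree_one, max_le_iff]
    exact ⟨le_trans natDegree_mul_le (by simp), by omega⟩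
  nlinarith

lemma natDegree_Xsub1_pow_le (n : ℕ) : ((X - 1 : F[X]) ^ n).natDegree ≤ n := by
  apply le_trans natDegree_pow_le
  have h : (X - 1 : F[X]).natDegree ≤ 1 := by
    apply le_trans (natDegree_sub_le _ _); simp
  nlinarith

lemma mkRv_natDegree_le (t q : ℕ) (b : F) (v : Fin (2*q+13) × Fin (q^3) × Fin q) (k : ℕ) :
    (mkRv t q b v k).natDegree ≤ q^3 - 1 + 3 * k := by
  unfold mkRv
  apply natDegree_sum_le_of_forall_le
  intro x _
  apply natDegree_sum_le_of_forall_le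
  intro y _
  apply le_trans natDegree_mul_le
  rw [natDegree_C, zero_add]
  have hv : (v.2.1 : ℕ) ≤ q^3 - 1 := by have := v.2.1.2; omega
  have hx : (X ^ (v.2.1.1 + k - y.1) : F[X]).natDegree ≤ q^3 - 1 + k := by
    rw [natDegree_X_pow]; omega
  have hl := natDegree_CXsub1_pow_le (F := F) b (k - y.2)
  have h2 := natDegree_Xsub1_pow_le (F := F) (k - x.2)
  have := natDegree_mul_le (p := (X ^ (v.2.1.1 + k - y.1) * (C b * X - 1) ^ (k - y.2) : F[X]))
    (q := ((X - 1 : F[X]) ^ (k - x.2)))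
  have := natDegree_mul_le (p := (X ^ (v.2.1.1 + k - y.1) : F[X]))
    (q := ((C b * X - 1 : F[X]) ^ (k - y.2)))
  have hsy : k - y.2 ≤ k := Nat.sub_le _ _
  have hsx : k - x.2 ≤ k := Nat.sub_le _ _
  omega

lemma support_sum_subset' {ι : Type*} (s : Finset ι) (f : ι → F[X]) :
    (∑ i ∈ s, f i).support ⊆ s.biUnion fun i => (f i).support := by
  classical
  induction s using Finset.induction with
  | empty => simp
  | insert _ _ h ih =>
    rw [Finset.sum_insert h, Finset.biUnion_insert]
    exact (Polynomial.support_add).trans (Finset.union_subset_union (subset_refl _) ih)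

lemma mkPsi_natDegree_le (t q : ℕ) (b : F)
    (l : Fin (2*q+13) × Fin (q^3) × Fin q → F) :
    (mkPsi t q b l).natDegree ≤ q^3 - 1 + t * (q - 1) + t * (2*q+12) := by
  unfold mkPsi mkMon
  apply natDegree_sum_le_of_forall_le
  intro v _
  apply le_trans natDegree_mul_le
  rw [natDegree_C, zero_add]
  have h1 : (X ^ (v.2.1.1 + t * v.2.2.1) : F[X]).natDegree ≤ q^3 - 1 + t * (q - 1) := by
    rw [natDegree_X_pow]
    have ha : (v.2.1 : ℕ) ≤ q^3 - 1 := by have := v.2.1.2; omega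
    have hi : (v.2.2 : ℕ) ≤ q - 1 := by have := v.2.2.2; omega
    have := Nat.mul_le_mul_left t hi
    omega
  have h2 := natDegree_CXsub1_pow_le (F := F) b (t * v.1.1)
  have h3 := natDegree_Xsub1_pow_le (F := F) (t * (2*q+12 - v.1.1))
  have h4 : t * v.1.1 + t * (2*q+12 - v.1.1) = t * (2*q+12) := by
    rw [← Nat.mul_add]
    congr 1
    have := v.1.2
    omega
  have h5 := natDegree_mul_le (p := (X ^ (v.2.1.1 + t * v.2.2.1) * (C b * X - 1) ^ (t * v.1.1) : F[X]))
    (q := ((X - 1 : F[X]) ^ (t * (2*q+12 - v.1.1))))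
  have h6 := natDegree_mul_le (p := (X ^ (v.2.1.1 + t * v.2.2.1) : F[X]))
    (q := ((C b * X - 1 : F[X]) ^ (t * v.1.1)))
  omega

end Mk

lemma sparse_rootMultiplicity' {p : ℕ} [hp : Fact p.Prime] (f : Polynomial (ZMod p))
    (hf : f ≠ 0) (hdeg : f.natDegree < p) (x : ZMod p) (hx : x ≠ 0) :
    f.rootMultiplicity x + 1 ≤ f.support.card :=
  sparse_rootMultiplicity f.natDegree f le_rfl hf hdeg x hx

lemma mkPsi_ne_zero {p : ℕ} [hp : Fact p.Prime] (t q : ℕ) (hq1 : 1 ≤ q) (hqt : q^4 ≤ t)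
    (hdegp : q^3 + t * q < p) (b : ZMod p) (hb : b ≠ 1)
    (l : Fin (2*q+13) × Fin (q^3) × Fin q → ZMod p) (hl : l ≠ 0) :
    mkPsi t q b l ≠ 0 := by
  classical
  have ht : 1 ≤ t := le_trans (Nat.one_le_pow _ _ (by omega)) hqt
  have hAt : q^3 ≤ t := le_trans (Nat.pow_le_pow_right hq1 (by norm_num)) hqt
  set G : Fin (2*q+13) → (ZMod p)[X] :=
    fun j => ∑ w : Fin (q^3) × Fin q, C (l (j, w)) * X ^ (w.1.1 + t * w.2.1) with hG
  have hinj : ∀ (w w' : Fin (q^3) × Fin q),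
      w.1.1 + t * w.2.1 = w'.1.1 + t * w'.2.1 → w = w' := by
    intro w w' h
    have h1 : (w.1 : ℕ) < t := lt_of_lt_of_le w.1.2 hAt
    have h1' : (w'.1 : ℕ) < t := lt_of_lt_of_le w'.1.2 hAt
    have m1 := Nat.add_mul_mod_self_left (w.1 : ℕ) t (w.2 : ℕ)
    have m2 := Nat.add_mul_mod_self_left (w'.1 : ℕ) t (w'.2 : ℕ)
    have m3 := Nat.mod_eq_of_lt h1
    have m4 := Nat.mod_eq_of_lt h1'
    rw [h] at m1
    have e1 : (w.1 : ℕ) = (w'.1 : ℕ) := by omega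
    have e2 : (w.2 : ℕ) = (w'.2 : ℕ) := by
      have : t * (w.2 : ℕ) = t * (w'.2 : ℕ) := by omega
      exact Nat.eq_of_mul_eq_mul_left ht this
    exact Prod.ext (Fin.ext e1) (Fin.ext e2)
  have hcoeffG : ∀ (j : Fin (2*q+13)) (w : Fin (q^3) × Fin q),
      (G j).coeff (w.1.1 + t * w.2.1) = l (j, w) := by
    intro j w
    rw [hG, finset_sum_coeff, Finset.sum_eq_single w]
    · rw [coeff_C_mul, coeff_X_pow, if_pos rfl, mul_one]
    · intro w' _ hww
      rw [coeff_C_mul, coeff_X_pow, if_neg, mul_zero]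
      intro h
      exact hww (hinj w' w h.symm)
    · intro h
      exact absurd (Finset.mem_univ w) h
  have hgroup : mkPsi t q b l = ∑ j, G j *
      ((C b * X - 1) ^ (t * j.1) * (X - 1) ^ (t * (2*q+12 - j.1))) := by
    unfold mkPsi
    rw [Fintype.sum_prod_type]
    apply Finset.sum_congr rfl
    intro j _
    rw [hG, Finset.sum_mul]
    apply Finset.sum_congr rfl
    intro w _
    unfold mkMon
    ring
  intro h0
  set Jset := Finset.univ.filter (fun j => G j ≠ 0) with hJ
  have hJne : Jset.Nonempty := by
    by_contra hne
    apply hl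
    funext v
    have hGz : G v.1 = 0 := by
      by_contra hg
      exact hne ⟨v.1, Finset.mem_filter.mpr ⟨Finset.mem_univ _, hg⟩⟩
    have hv := hcoeffG v.1 v.2
    rw [hGz, coeff_zero] at hv
    simpa using hv.symm
  set j₁ := Jset.max' hJne with hj₁def
  have hj₁mem : j₁ ∈ Jset := Finset.max'_mem _ _
  have hGj₁ : G j₁ ≠ 0 := (Finset.mem_filter.mp hj₁mem).2
  have hsum0 : ∑ j ∈ Jset, G j *
      ((C b * X - 1) ^ (t * j.1) * (X - 1) ^ (t * (2*q+12 - j.1))) = 0 := by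
    rw [Finset.sum_subset (Finset.subset_univ Jset)]
    · rw [← hgroup, h0]
    · intro j _ hj
      have : G j = 0 := by
        by_contra hg
        exact hj (Finset.mem_filter.mpr ⟨Finset.mem_univ _, hg⟩)
      rw [this, zero_mul]
  have hsplit : G j₁ * ((C b * X - 1) ^ (t * j₁.1) * (X - 1) ^ (t * (2*q+12 - j₁.1)))
      = - ∑ j ∈ Jset.erase j₁, G j *
          ((C b * X - 1) ^ (t * j.1) * (X - 1) ^ (t * (2*q+12 - j.1))) := by
    have hh := Finset.add_sum_erase Jset
      (fun j => G j * ((C b * X - 1) ^ (t * j.1) * (X - 1) ^ (t * (2*q+12 - j.1)))) hj₁mem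
    rw [hsum0] at hh
    linear_combination hh
  have hdvdsum : (X - 1 : (ZMod p)[X]) ^ (t * (2*q+12 - j₁.1) + t) ∣
      ∑ j ∈ Jset.erase j₁, G j *
        ((C b * X - 1) ^ (t * j.1) * (X - 1) ^ (t * (2*q+12 - j.1))) := by
    apply Finset.dvd_sum
    intro j hj
    have hjm := Finset.mem_erase.mp hj
    have hjlt : j < j₁ := lt_of_le_of_ne (Finset.le_max' _ _ hjm.2) hjm.1
    have hjv : (j.1 : ℕ) < (j₁.1 : ℕ) := hjlt
    have hexp : t * (2*q+12 - j₁.1) + t ≤ t * (2*q+12 - j.1) := by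
      have hb1 : (j₁.1 : ℕ) ≤ 2*q+12 := by have := j₁.2; omega
      have hstep : (2*q+12 - (j₁.1 : ℕ)) + 1 ≤ 2*q+12 - (j.1 : ℕ) := by omega
      calc t * (2*q+12 - j₁.1) + t = t * ((2*q+12 - (j₁.1:ℕ)) + 1) := by ring
        _ ≤ t * (2*q+12 - j.1) := Nat.mul_le_mul_left t hstep
    exact dvd_trans (pow_dvd_pow _ hexp) ⟨G j * (C b * X - 1) ^ (t * j.1), by ring⟩
  replace hdvdsum : (X - 1 : (ZMod p)[X]) ^ (t * (2*q+12 - j₁.1) + t) ∣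
      G j₁ * ((C b * X - 1) ^ (t * j₁.1) * (X - 1) ^ (t * (2*q+12 - j₁.1))) := by
    rw [hsplit]
    exact dvd_neg.mpr hdvdsum
  have hX1ne : ((X - 1 : (ZMod p)[X])) ≠ 0 := by
    rw [show (X - 1 : (ZMod p)[X]) = X - C 1 by rw [C_1]]
    exact X_sub_C_ne_zero 1
  have hdvdG2 : (X - 1 : (ZMod p)[X]) ^ t ∣ G j₁ * (C b * X - 1) ^ (t * j₁.1) := by
    have heq : G j₁ * ((C b * X - 1) ^ (t * j₁.1) * (X - 1) ^ (t * (2*q+12 - j₁.1)))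
        = (X - 1) ^ (t * (2*q+12 - j₁.1)) * (G j₁ * (C b * X - 1) ^ (t * j₁.1)) := by ring
    rw [heq, pow_add] at hdvdsum
    exact (mul_dvd_mul_iff_left (pow_ne_zero _ hX1ne)).mp hdvdsum
  have hnd : ¬ (X - C 1 : (ZMod p)[X]) ∣ (C b * X - 1) ^ (t * j₁.1) := by
    intro hdd
    have := (prime_X_sub_C (1 : ZMod p)).dvd_of_dvd_pow hdd
    rw [Polynomial.dvd_iff_isRoot] at this
    simp [IsRoot] at this
    exact hb (by linear_combination this)
  have hdvdG : (X - C 1 : (ZMod p)[X]) ^ t ∣ G j₁ := by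
    apply (prime_X_sub_C (1 : ZMod p)).pow_dvd_of_dvd_mul_right t hnd
    rw [show (X - C 1 : (ZMod p)[X]) = X - 1 by rw [C_1]]
    exact hdvdG2
  have hmult : t ≤ rootMultiplicity 1 (G j₁) := (le_rootMultiplicity_iff hGj₁).mpr hdvdG
  have hdegG : (G j₁).natDegree ≤ q^3 - 1 + t * (q - 1) := by
    rw [hG]
    apply natDegree_sum_le_of_forall_le
    intro w _
    apply le_trans natDegree_mul_le
    rw [natDegree_C, zero_add, natDegree_X_pow]
    have ha : (w.1 : ℕ) ≤ q^3 - 1 := by have := w.1.2; omega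
    have hi : (w.2 : ℕ) ≤ q - 1 := by have := w.2.2; omega
    have := Nat.mul_le_mul_left t hi
    omega
  have hsupp : (G j₁).support.card ≤ q^3 * q := by
    rw [hG]
    apply le_trans (Finset.card_le_card (support_sum_subset' _ _))
    apply le_trans (Finset.card_biUnion_le)
    calc ∑ w : Fin (q^3) × Fin q, (C (l (j₁, w)) * X ^ (w.1.1 + t * w.2.1)).support.card
        ≤ ∑ _w : Fin (q^3) × Fin q, 1 := by
          apply Finset.sum_le_sum
          intro w _
          rw [C_mul_X_pow_eq_monomial]
          exact le_trans (Finset.card_le_card (support_monomial' _ _)) (by simp)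
      _ = q^3 * q := by simp [Finset.card_univ, mul_comm]
  have hsparse := sparse_rootMultiplicity' (G j₁) hGj₁
    (by
      have : t * (q - 1) ≤ t * q := Nat.mul_le_mul_left t (Nat.sub_le _ _)
      omega) 1 one_ne_zero
  have hq4 : q^3 * q = q^4 := by ring
  omega

lemma mkPsi_mult {F : Type*} [Field F] (t q : ℕ) (b : F)
    (l : Fin (2*q+13) × Fin (q^3) × Fin q → F) (x₀ : F)
    (hx0 : x₀ ≠ 0) (hx1 : x₀ - 1 ≠ 0) (hbx : b * x₀ - 1 ≠ 0)
    (hxt : x₀ ^ t = 1) (hss : (b * x₀ - 1) ^ t = (x₀ - 1) ^ t)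
    (D : ℕ) (hRk : ∀ k < D, mkRk t q b l k = 0) :
    (X - C x₀) ^ D ∣ mkPsi t q b l := by
  classical
  set s : F := (x₀ - 1) ^ t with hsdef
  have hs : s ≠ 0 := pow_ne_zero _ hx1
  set T : F[X] := ∑ v, C (l v) *
      ((X + C x₀) ^ (v.2.1.1 + t * v.2.2.1) *
       (C b * X + C (b * x₀ - 1)) ^ (t * v.1.1) *
       (X + C (x₀ - 1)) ^ (t * (2*q+12 - v.1.1))) with hT
  have hcomp : T.comp (X - C x₀) = mkPsi t q b l := by
    rw [hT, Polynomial.sum_comp]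
    unfold mkPsi
    apply Finset.sum_congr rfl
    intro v _
    simp only [mul_comp, add_comp, pow_comp, X_comp, C_comp]
    have c2 : (C (b * x₀ - 1) : F[X]) = C b * C x₀ - 1 := by
      rw [map_sub, map_mul, map_one]
    have c3 : (C (x₀ - 1) : F[X]) = C x₀ - 1 := by
      rw [map_sub, map_one]
    rw [c2, c3]
    unfold mkMon
    ring
  have hu : (x₀ * (b * x₀ - 1) * (x₀ - 1)) ≠ 0 := by
    exact mul_ne_zero (mul_ne_zero hx0 hbx) hx1
  have hcoeffT : ∀ k < D, T.coeff k = 0 := by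
    intro k hk
    have hkey : (x₀ * (b * x₀ - 1) * (x₀ - 1)) ^ k * T.coeff k
        = s ^ (2*q+12) * Polynomial.eval x₀ (mkRk t q b l k) := by
      rw [hT, finset_sum_coeff]
      unfold mkRk
      rw [eval_finset_sum, Finset.mul_sum, Finset.mul_sum]
      apply Finset.sum_congr rfl
      intro v _
      rw [coeff_C_mul, eval_mul, eval_C]
      have hkid := key_term_identity t (v.2.1.1) (v.2.2.1) (v.1.1) (2*q+12 - v.1.1) k b x₀ s
        hxt hsdef.symm hss
      have hjm : (v.1.1 : ℕ) + (2*q+12 - v.1.1) = 2*q+12 := by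
        have := v.1.2; omega
      rw [hjm] at hkid
      have hmkrv : mkRv t q b v k = ∑ x ∈ antidiagonal k, ∑ y ∈ antidiagonal x.1,
          C ((((v.2.1.1 + t * v.2.2.1).choose y.1 * (t * v.1.1).choose y.2 *
            (t * (2*q+12 - v.1.1)).choose x.2 : ℕ) : F) * b ^ y.2) *
          (X ^ (v.2.1.1 + k - y.1) * (C b * X - 1) ^ (k - y.2) * (X - 1) ^ (k - x.2)) := rfl
      rw [hmkrv]
      linear_combination (l v) * hkid
    rw [hRk k hk] at hkey
    simp only [eval_zero, mul_zero] at hkey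
    rcases mul_eq_zero.mp hkey with h | h
    · exact absurd h (pow_ne_zero _ hu)
    · exact h
  have hXD : (X : F[X]) ^ D ∣ T := X_pow_dvd_iff.mpr hcoeffT
  obtain ⟨h, hh⟩ := hXD
  refine ⟨h.comp (X - C x₀), ?_⟩
  rw [← hcomp, hh, mul_comp, pow_comp, X_comp]

lemma sum_count_le {α : Type*} [DecidableEq α] (s : Finset α) (M : Multiset α) :
    ∑ x ∈ s, M.count x ≤ Multiset.card M := by
  classical
  have h1 : ∑ x ∈ s ∩ M.toFinset, M.count x = ∑ x ∈ s, M.count x := by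
    apply Finset.sum_subset Finset.inter_subset_left
    intro x _ hx
    rw [Multiset.count_eq_zero]
    intro hmem
    exact hx (Finset.mem_inter.mpr ⟨‹x ∈ s›, Multiset.mem_toFinset.mpr hmem⟩)
  rw [← h1]
  calc ∑ x ∈ s ∩ M.toFinset, M.count x ≤ ∑ x ∈ M.toFinset, M.count x :=
        Finset.sum_le_sum_of_subset Finset.inter_subset_right
    _ = Multiset.card M := Multiset.toFinset_sum_count_eq M

lemma stepanov_nat {p : ℕ} [hp : Fact p.Prime] (t q : ℕ) (hq1 : 1 ≤ q) (hqt : q^4 ≤ t)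
    (hdegp : q^3 + t * q < p) (b : ZMod p) (hb : b ≠ 1) :
    2*q^2 * (Finset.univ.filter
        (fun x : ZMod p => x^t = 1 ∧ x ≠ 1 ∧ (b*x-1)^t = (x-1)^t)).card
      ≤ q^3 + 3*(t*q) + 13*t := by
  classical
  have ht : 1 ≤ t := le_trans (Nat.one_le_pow _ _ (by omega)) hqt
  have hq4 : 1 ≤ q^4 := Nat.one_le_pow _ _ (by omega)
  set D := 2*q^2 with hD
  set L : (Fin (2*q+13) × Fin (q^3) × Fin q → ZMod p) →
      (Fin D × Fin (q^3 + 3*D) → ZMod p) :=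
    fun l km => (mkRk t q b l km.1.1).coeff km.2.1 with hL
  have hcard : Fintype.card (Fin D × Fin (q^3 + 3*D) → ZMod p)
      < Fintype.card (Fin (2*q+13) × Fin (q^3) × Fin q → ZMod p) := by
    rw [Fintype.card_fun, Fintype.card_fun, ZMod.card, Fintype.card_prod, Fintype.card_prod,
      Fintype.card_prod, Fintype.card_fin, Fintype.card_fin, Fintype.card_fin,
      Fintype.card_fin, Fintype.card_fin]
    apply Nat.pow_lt_pow_right hp.out.one_lt
    rw [hD]
    nlinarith [hq4]
  obtain ⟨l₁, l₂, hne, hLeq⟩ := Fintype.exists_ne_map_eq_of_card_lt L hcard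
  set l := l₁ - l₂ with hldef
  have hl : l ≠ 0 := sub_ne_zero.mpr hne
  have hRkdeg : ∀ (l' : Fin (2*q+13) × Fin (q^3) × Fin q → ZMod p) (k : ℕ),
      (mkRk t q b l' k).natDegree ≤ q^3 - 1 + 3*k := by
    intro l' k
    unfold mkRk
    apply natDegree_sum_le_of_forall_le
    intro v _
    apply le_trans natDegree_mul_le
    rw [natDegree_C, zero_add]
    exact mkRv_natDegree_le t q b v k
  have hRk0 : ∀ k < D, mkRk t q b l k = 0 := by
    intro k hk
    have heq : mkRk t q b l₁ k = mkRk t q b l₂ k := by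
      apply Polynomial.ext
      intro n
      rcases lt_or_ge n (q^3 + 3*D) with hn | hn
      · exact congrFun hLeq (⟨k, hk⟩, ⟨n, hn⟩)
      · rw [coeff_eq_zero_of_natDegree_lt, coeff_eq_zero_of_natDegree_lt]
        · exact lt_of_le_of_lt (hRkdeg l₂ k) (by omega)
        · exact lt_of_le_of_lt (hRkdeg l₁ k) (by omega)
    rw [hldef, mkRk_sub, heq, sub_self]
  have hPsine := mkPsi_ne_zero t q hq1 hqt hdegp b hb l hl
  set S := Finset.univ.filter
      (fun x : ZMod p => x^t = 1 ∧ x ≠ 1 ∧ (b*x-1)^t = (x-1)^t) with hS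
  have hmult : ∀ x₀ ∈ S, D ≤ Multiset.count x₀ (mkPsi t q b l).roots := by
    intro x₀ hx₀
    obtain ⟨-, hxt, hx1, hss⟩ := Finset.mem_filter.mp hx₀
    have hx0 : x₀ ≠ 0 := by
      intro h
      rw [h, zero_pow (by omega)] at hxt
      exact zero_ne_one hxt
    have hx1' : x₀ - 1 ≠ 0 := sub_ne_zero.mpr hx1
    have hbx : b * x₀ - 1 ≠ 0 := by
      intro h
      rw [h, zero_pow (by omega)] at hss
      have h0 : (x₀ - 1) ^ t = 0 := hss.symm
      have ht0 : t ≠ 0 := by omega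
      exact hx1' ((pow_eq_zero_iff ht0).mp h0)
    rw [Polynomial.count_roots]
    exact (le_rootMultiplicity_iff hPsine).mpr
      (mkPsi_mult t q b l x₀ hx0 hx1' hbx hxt hss D hRk0)
  have h1 : D * S.card ≤ Multiset.card (mkPsi t q b l).roots := by
    calc D * S.card = ∑ _x₀ ∈ S, D := by rw [Finset.sum_const, smul_eq_mul, mul_comm]
      _ ≤ ∑ x₀ ∈ S, Multiset.count x₀ (mkPsi t q b l).roots := Finset.sum_le_sum hmult
      _ ≤ Multiset.card (mkPsi t q b l).roots := sum_count_le _ _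
  have h2 := Polynomial.card_roots' (mkPsi t q b l)
  have h3 := mkPsi_natDegree_le t q b l
  have e1 : t*(q-1) ≤ t*q := Nat.mul_le_mul_left _ (Nat.sub_le _ _)
  have e2 : t*(2*q+12) = 2*(t*q)+12*t := by ring
  omega

set_option maxHeartbeats 1000000 in
theorem markoff_trace_equation_roots_of_unity_bound :
    ∃ C : ℝ, 0 < C ∧ ∃ P₀ : ℕ,
      ∀ (p : ℕ) [Fact p.Prime], P₀ ≤ p →
        ∀ t : ℕ, t ∣ p - 1 → (t : ℝ) ≤ (p : ℝ) ^ ((3 : ℝ) / 4) →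
          ∀ b : ZMod p, b ≠ 1 →
            ({wr : ZMod p × ZMod p | wr.1 ≠ 0 ∧ wr.2 ≠ 0 ∧
                wr.1 + wr.1⁻¹ = wr.2 + b * wr.2⁻¹ ∧
                wr.1 ^ t = 1 ∧ wr.2 ^ t = 1}.ncard : ℝ) ≤ C * (t : ℝ) ^ ((3 : ℝ) / 4) := by
  classical
  refine ⟨100, by norm_num, 2^20, ?_⟩
  intro p hp hP t htdvd htp b hb
  have hp2 : 2 ≤ p := hp.out.two_le
  have hpbig : (2:ℕ)^20 ≤ p := hP
  have ht1 : 1 ≤ t := by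
    rcases Nat.eq_zero_or_pos t with h | h
    · subst h
      have : p - 1 = 0 := Nat.eq_zero_of_zero_dvd htdvd
      omega
    · exact h
  -- set up q
  set x : ℝ := (t : ℝ) ^ ((1:ℝ)/4) with hxdef
  have htR : (1:ℝ) ≤ (t:ℝ) := by exact_mod_cast ht1
  have hx1 : 1 ≤ x := by
    rw [hxdef]
    calc (1:ℝ) = 1 ^ ((1:ℝ)/4) := (Real.one_rpow _).symm
      _ ≤ (t:ℝ) ^ ((1:ℝ)/4) := Real.rpow_le_rpow (by norm_num) htR (by norm_num)
  set q : ℕ := ⌊x⌋₊ with hqdef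
  have hq1 : 1 ≤ q := Nat.le_floor (by exact_mod_cast hx1)
  have hqx : (q:ℝ) ≤ x := Nat.floor_le (by positivity)
  have hx2q : x ≤ 2*q := by
    have := Nat.lt_floor_add_one x
    have hq1R : (1:ℝ) ≤ (q:ℝ) := by exact_mod_cast hq1
    rw [← hqdef] at this
    nlinarith
  have hx4 : x ^ (4:ℕ) = (t:ℝ) := by
    rw [hxdef, ← Real.rpow_natCast ((t:ℝ) ^ ((1:ℝ)/4)) 4, ← Real.rpow_mul (by positivity)]
    norm_num
  have hqt : q^4 ≤ t := by
    have h1 : (q:ℝ)^(4:ℕ) ≤ x^(4:ℕ) := pow_le_pow_left₀ (by positivity) hqx 4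
    rw [hx4] at h1
    exact_mod_cast h1
  -- q^3 + t*q < p
  have hppos : (0:ℝ) < (p:ℝ) := by positivity
  have hp1R : (1:ℝ) ≤ (p:ℝ) := by exact_mod_cast (by omega : 1 ≤ p)
  have hdegp : q^3 + t*q < p := by
    have hz : x ≤ (p:ℝ) ^ ((3:ℝ)/16) := by
      rw [hxdef]
      calc (t:ℝ) ^ ((1:ℝ)/4) ≤ ((p:ℝ) ^ ((3:ℝ)/4)) ^ ((1:ℝ)/4) :=
            Real.rpow_le_rpow (by positivity) htp (by norm_num)
        _ = (p:ℝ) ^ ((3:ℝ)/16) := by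
            rw [← Real.rpow_mul (le_of_lt hppos)]; norm_num
    have hq3 : (q:ℝ)^(3:ℕ) ≤ (p:ℝ) ^ ((9:ℝ)/16) := by
      calc (q:ℝ)^(3:ℕ) ≤ ((p:ℝ) ^ ((3:ℝ)/16))^(3:ℕ) :=
            pow_le_pow_left₀ (by positivity) (le_trans hqx hz) 3
        _ = (p:ℝ) ^ ((9:ℝ)/16) := by
            rw [← Real.rpow_natCast ((p:ℝ) ^ ((3:ℝ)/16)) 3, ← Real.rpow_mul (le_of_lt hppos)]
            norm_num
    have htq : (t:ℝ) * q ≤ (p:ℝ) ^ ((15:ℝ)/16) := by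
      calc (t:ℝ) * q ≤ ((p:ℝ) ^ ((3:ℝ)/4)) * ((p:ℝ) ^ ((3:ℝ)/16)) := by
            apply mul_le_mul htp (le_trans hqx hz) (by positivity) (by positivity)
        _ = (p:ℝ) ^ ((15:ℝ)/16) := by
            rw [← Real.rpow_add hppos]; norm_num
    have h916 : (p:ℝ) ^ ((9:ℝ)/16) ≤ (p:ℝ) ^ ((15:ℝ)/16) :=
      Real.rpow_le_rpow_of_exponent_le hp1R (by norm_num)
    have hsplit : (p:ℝ) = (p:ℝ) ^ ((15:ℝ)/16) * (p:ℝ) ^ ((1:ℝ)/16) := by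
      rw [← Real.rpow_add hppos]; norm_num
    have h2lt : (2:ℝ) < (p:ℝ) ^ ((1:ℝ)/16) := by
      have h1 : ((2:ℝ)^(20:ℕ)) ≤ (p:ℝ) := by exact_mod_cast hpbig
      have h2 : ((2:ℝ)^(20:ℕ)) ^ ((1:ℝ)/16) ≤ (p:ℝ) ^ ((1:ℝ)/16) :=
        Real.rpow_le_rpow (by positivity) h1 (by norm_num)
      have h3 : ((2:ℝ)^(20:ℕ)) ^ ((1:ℝ)/16) = (2:ℝ) ^ ((5:ℝ)/4) := by
        rw [← Real.rpow_natCast (2:ℝ) 20, ← Real.rpow_mul (by norm_num)]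
        norm_num
      have h4 : (2:ℝ) < (2:ℝ) ^ ((5:ℝ)/4) := by
        nth_rewrite 1 [show (2:ℝ) = (2:ℝ) ^ ((1:ℝ)) by rw [Real.rpow_one]]
        exact Real.rpow_lt_rpow_of_exponent_lt (by norm_num) (by norm_num)
      linarith [h2, h3 ▸ h2]
    have hpos15 : (0:ℝ) < (p:ℝ) ^ ((15:ℝ)/16) := by positivity
    have hfinal : (q:ℝ)^(3:ℕ) + (t:ℝ)*q < (p:ℝ) := by
      calc (q:ℝ)^(3:ℕ) + (t:ℝ)*q ≤ (p:ℝ) ^ ((15:ℝ)/16) + (p:ℝ) ^ ((15:ℝ)/16) := by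
            linarith [le_trans hq3 h916, htq]
        _ = 2 * (p:ℝ) ^ ((15:ℝ)/16) := by ring
        _ < (p:ℝ) ^ ((1:ℝ)/16) * (p:ℝ) ^ ((15:ℝ)/16) := by
            apply mul_lt_mul_of_pos_right h2lt hpos15
        _ = (p:ℝ) := by rw [mul_comm, ← hsplit]
    exact_mod_cast hfinal
  -- main count
  have hmain := stepanov_nat t q hq1 hqt hdegp b hb
  set S : Finset (ZMod p) := Finset.univ.filter
    (fun x : ZMod p => x^t = 1 ∧ x ≠ 1 ∧ (b*x-1)^t = (x-1)^t) with hSdef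
  -- the pair set
  set PS : Set (ZMod p × ZMod p) := {wr : ZMod p × ZMod p | wr.1 ≠ 0 ∧ wr.2 ≠ 0 ∧
      wr.1 + wr.1⁻¹ = wr.2 + b * wr.2⁻¹ ∧ wr.1 ^ t = 1 ∧ wr.2 ^ t = 1} with hPS
  have hfin : PS.Finite := Set.toFinite _
  set SF : Finset (ZMod p × ZMod p) := hfin.toFinset with hSF
  set f : ZMod p × ZMod p → ZMod p := fun wr => wr.1 * wr.2⁻¹ with hf
  -- key algebraic facts for members of SF
  have hmem : ∀ wr ∈ SF, wr.1 ≠ 0 ∧ wr.2 ≠ 0 ∧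
      wr.1 + wr.1⁻¹ = wr.2 + b * wr.2⁻¹ ∧ wr.1 ^ t = 1 ∧ wr.2 ^ t = 1 := by
    intro wr hwr
    exact (Set.Finite.mem_toFinset hfin).mp hwr
  have heq' : ∀ wr ∈ SF, wr.1*wr.1*wr.2 + wr.2 = wr.1*wr.2*wr.2 + b*wr.1 := by
    intro wr hwr
    obtain ⟨hw0, hr0, heq, -, -⟩ := hmem wr hwr
    calc wr.1*wr.1*wr.2 + wr.2 = (wr.1 + wr.1⁻¹) * (wr.1*wr.2) := by
          field_simp
      _ = (wr.2 + b * wr.2⁻¹) * (wr.1*wr.2) := by rw [heq]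
      _ = wr.1*wr.2*wr.2 + b*wr.1 := by field_simp
  have hη0 : ∀ wr ∈ SF, f wr ≠ 0 := by
    intro wr hwr
    obtain ⟨hw0, hr0, -, -, -⟩ := hmem wr hwr
    exact mul_ne_zero hw0 (inv_ne_zero hr0)
  have hηt : ∀ wr ∈ SF, (f wr)^t = 1 := by
    intro wr hwr
    obtain ⟨hw0, hr0, -, hwt, hrt⟩ := hmem wr hwr
    rw [hf]
    simp only [mul_pow, inv_pow, hwt, hrt, inv_one, mul_one]
  have hη1 : ∀ wr ∈ SF, f wr ≠ 1 := by
    intro wr hwr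
    obtain ⟨hw0, hr0, heq, -, -⟩ := hmem wr hwr
    intro h
    have hwρ : wr.1 = wr.2 := (mul_inv_eq_one₀ hr0).mp h
    rw [hwρ] at heq
    have h2 : wr.2⁻¹ = b * wr.2⁻¹ := by linear_combination heq
    have h3 : (1 : ZMod p) = b := by
      calc (1 : ZMod p) = wr.2⁻¹ * wr.2 := (inv_mul_cancel₀ hr0).symm
        _ = (b * wr.2⁻¹) * wr.2 := by rw [← h2]
        _ = b * (wr.2⁻¹ * wr.2) := by ring
        _ = b := by rw [inv_mul_cancel₀ hr0, mul_one]
    exact hb h3.symm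
  have hρval : ∀ wr ∈ SF, wr.2 = (f wr)⁻¹ * wr.1 := by
    intro wr hwr
    obtain ⟨hw0, hr0, -, -, -⟩ := hmem wr hwr
    rw [hf]
    field_simp
  have hkey : ∀ wr ∈ SF, wr.1^2 * (f wr - 1) = f wr * (b * f wr - 1) := by
    intro wr hwr
    obtain ⟨hw0, hr0, -, -, -⟩ := hmem wr hwr
    have h := heq' wr hwr
    have hρ2 : f wr * wr.2 = wr.1 := by
      have : f wr = wr.1 * wr.2⁻¹ := rfl
      rw [this]
      field_simp
    apply mul_right_cancel₀ (pow_ne_zero 2 hr0)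
    calc wr.1^2 * (f wr - 1) * wr.2^2 = wr.1^2 * ((f wr * wr.2) * wr.2 - wr.2^2) := by ring
      _ = wr.1^2 * (wr.1 * wr.2 - wr.2^2) := by rw [hρ2]
      _ = b * (wr.1 * wr.1) - wr.1 * wr.2 + (wr.1^2*wr.2 + wr.2 - wr.1*wr.2^2 - b*wr.1) * wr.1 := by
          ring
      _ = b * ((f wr * wr.2) * (f wr * wr.2)) - (f wr * wr.2) * wr.2
          + (wr.1^2*wr.2 + wr.2 - wr.1*wr.2^2 - b*wr.1) * wr.1 := by rw [hρ2]
      _ = f wr * (b * f wr - 1) * wr.2^2 := by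
          have h0 : wr.1^2*wr.2 + wr.2 - wr.1*wr.2^2 - b*wr.1 = 0 := by linear_combination h
          rw [h0]
          ring
  have hξ : ∀ wr ∈ SF, (b * f wr - 1)^t = (f wr - 1)^t := by
    intro wr hwr
    obtain ⟨hw0, hr0, -, hwt, hrt⟩ := hmem wr hwr
    have h := heq' wr hwr
    have hxi : (wr.1 * wr.2) * (f wr - 1) = b * f wr - 1 := by
      have hρ2 : f wr * wr.2 = wr.1 := by
        have : f wr = wr.1 * wr.2⁻¹ := rfl
        rw [this]
        field_simp
      apply mul_right_cancel₀ hr0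
      calc (wr.1 * wr.2) * (f wr - 1) * wr.2 = wr.1 * wr.2 * (f wr * wr.2) - wr.1 * wr.2^2 := by
            ring
        _ = wr.1 * wr.2 * wr.1 - wr.1 * wr.2^2 := by rw [hρ2]
        _ = b * (f wr * wr.2) - wr.2 := by
            rw [hρ2]
            linear_combination h
        _ = (b * f wr - 1) * wr.2 := by ring
    calc (b * f wr - 1)^t = ((wr.1 * wr.2) * (f wr - 1))^t := by rw [hxi]
      _ = (wr.1^t * wr.2^t) * (f wr - 1)^t := by rw [mul_pow, mul_pow]
      _ = (f wr - 1)^t := by rw [hwt, hrt, one_mul, one_mul]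
  -- image lands in S
  have himg : SF.image f ⊆ S := by
    intro η hη
    obtain ⟨wr, hwr, rfl⟩ := Finset.mem_image.mp hη
    exact Finset.mem_filter.mpr ⟨Finset.mem_univ _, hηt wr hwr, hη1 wr hwr, hξ wr hwr⟩
  -- fibers have at most 2 elements
  have hfib : ∀ η ∈ SF.image f, (SF.filter (fun wr => f wr = η)).card ≤ 2 := by
    intro η hη
    obtain ⟨wr₀, hwr₀, hf₀⟩ := Finset.mem_image.mp hη
    have hsub : SF.filter (fun wr => f wr = η) ⊆ {wr₀, (-wr₀.1, -wr₀.2)} := by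
      intro wr hwr
      obtain ⟨hwrS, hfwr⟩ := Finset.mem_filter.mp hwr
      have hη1' : η - 1 ≠ 0 := sub_ne_zero.mpr (hf₀ ▸ hη1 wr₀ hwr₀)
      have hηne0 : η ≠ 0 := hf₀ ▸ hη0 wr₀ hwr₀
      have hk1 := hkey wr hwrS
      have hk0 := hkey wr₀ hwr₀
      rw [hfwr] at hk1
      rw [hf₀] at hk0
      have hsq : wr.1^2 = wr₀.1^2 := by
        have hz : (wr.1^2 - wr₀.1^2) * (η - 1) = 0 := by linear_combination hk1 - hk0
        rcases mul_eq_zero.mp hz with h | h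
        · exact sub_eq_zero.mp h
        · exact absurd h hη1'
      have hcases : wr.1 = wr₀.1 ∨ wr.1 = -wr₀.1 := by
        have hz : (wr.1 - wr₀.1) * (wr.1 + wr₀.1) = 0 := by linear_combination hsq
        rcases mul_eq_zero.mp hz with h | h
        · left; exact sub_eq_zero.mp h
        · right; exact eq_neg_of_add_eq_zero_left h
      have hr1 := hρval wr hwrS
      have hr0' := hρval wr₀ hwr₀
      rw [hfwr] at hr1
      rw [hf₀] at hr0'
      rcases hcases with h | h
      · apply Finset.mem_insert.mpr
        left
        have : wr.2 = wr₀.2 := by rw [hr1, hr0', h]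
        exact Prod.ext h this
      · apply Finset.mem_insert.mpr
        right
        apply Finset.mem_singleton.mpr
        have : wr.2 = -wr₀.2 := by rw [hr1, hr0', h]; ring
        exact Prod.ext h this
    calc (SF.filter (fun wr => f wr = η)).card ≤ ({wr₀, (-wr₀.1, -wr₀.2)} : Finset _).card :=
          Finset.card_le_card hsub
      _ ≤ 2 := by
          apply le_trans (Finset.card_insert_le _ _)
          simp
  have hSFcard : SF.card ≤ 2 * S.card := by
    calc SF.card ≤ 2 * (SF.image f).card := Finset.card_le_mul_card_image _ 2 hfib
      _ ≤ 2 * S.card := by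
          apply Nat.mul_le_mul_left
          exact Finset.card_le_card himg
  -- convert to reals
  have hncard : PS.ncard = SF.card := Set.ncard_eq_toFinset_card PS hfin
  rw [hncard]
  -- real arithmetic
  set Y : ℝ := (t:ℝ) ^ ((3:ℝ)/4) with hYdef
  have hY0 : (0:ℝ) ≤ Y := by positivity
  have hxY : x * Y = (t:ℝ) := by
    rw [hxdef, hYdef, ← Real.rpow_add (by positivity : (0:ℝ) < (t:ℝ))]
    norm_num
  have hx2Y : x^(2:ℕ) ≤ Y := by
    have e1 : x^(2:ℕ) = (t:ℝ) ^ ((1:ℝ)/2) := by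
      rw [hxdef, ← Real.rpow_natCast ((t:ℝ) ^ ((1:ℝ)/4)) 2, ← Real.rpow_mul (by positivity)]
      norm_num
    rw [e1, hYdef]
    exact Real.rpow_le_rpow_of_exponent_le htR (by norm_num)
  have hxleY : x ≤ Y := by
    rw [hxdef, hYdef]
    exact Real.rpow_le_rpow_of_exponent_le htR (by norm_num)
  have hQ : (1:ℝ) ≤ (q:ℝ) := by exact_mod_cast hq1
  have hmainR : 2*(q:ℝ)^(2:ℕ) * (S.card : ℝ) ≤ (q:ℝ)^(3:ℕ) + 3*((t:ℝ)*(q:ℝ)) + 13*(t:ℝ) := by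
    exact_mod_cast hmain
  have hNle : (S.card : ℝ) ≤ 30 * Y := by
    have hb1 : (q:ℝ)^(3:ℕ) ≤ (q:ℝ)^(2:ℕ) * Y := by
      have : (q:ℝ) ≤ Y := le_trans hqx hxleY
      nlinarith [sq_nonneg (q:ℝ), hQ]
    have hb2 : 3*((t:ℝ)*(q:ℝ)) ≤ 6 * ((q:ℝ)^(2:ℕ) * Y) := by
      have h1 : (t:ℝ) = x * Y := hxY.symm
      rw [h1]
      have h2 : (0:ℝ) ≤ Y * (q:ℝ) := mul_nonneg hY0 (by positivity)
      nlinarith [mul_le_mul_of_nonneg_right hx2q h2]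
    have hb3 : 13*(t:ℝ) ≤ 52 * ((q:ℝ)^(2:ℕ) * Y) := by
      have h1 : (t:ℝ) = x * Y := hxY.symm
      rw [h1]
      have h2 : (0:ℝ) ≤ Y := hY0
      have h3 := mul_le_mul_of_nonneg_right hx2q h2
      have h4 : (0:ℝ) ≤ (q:ℝ) * Y := mul_nonneg (by positivity) hY0
      nlinarith [h3, h4, hQ]
    have hq2pos : (0:ℝ) < (q:ℝ)^(2:ℕ) := by positivity
    nlinarith [hmainR, hb1, hb2, hb3, hq2pos, mul_nonneg (le_of_lt hq2pos) hY0]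
  calc (SF.card : ℝ) ≤ 2 * (S.card : ℝ) := by exact_mod_cast hSFcard
    _ ≤ 2 * (30 * Y) := by linarith [hNle]
    _ ≤ 100 * Y := by linarith [hY0]
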